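/- arXiv:1306.4298 — 5 statements merged into one kernel-verified Lean document; each statement's English description precedes it below -/
import Mathlib

section
/- Let s ≥ 1, let p be a prime, and let (m_d)_{d≥1} be rational numbers such that m_d - (1/p^s) m_{d/p} is p-integral for all d (with the convention m_{d/p} = 0 when p ∤ d). Define n_d = Σ_{k|d} μ(k) m_{d/k} / k^s. Then n_d is p-integral for every d ≥ 1. -/
open ArithmeticFunction

/-- A rational number is `p`-integral if its reduced denominator is not divisible by `p`. -/
def PIntegral (p : ℕ) (x : ℚ) : Prop := ¬ p ∣ x.den

lemma pIntegral_iff (p : ℕ) [hp : Fact p.Prime] (x : ℚ) :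
    PIntegral p x ↔ ‖(x : ℚ_[p])‖ ≤ 1 := by
  constructor
  · exact Padic.norm_rat_le_one
  · intro h
    by_contra hden
    simp only [PIntegral, not_not] at hden
    have hnum : ¬ ((p : ℤ) ∣ x.num) := by
      intro hdvd
      have h1 : p ∣ x.num.natAbs := by simpa using Int.natAbs_dvd_natAbs.mpr hdvd
      have := Nat.dvd_gcd h1 hden
      rw [x.reduced] at this
      exact hp.out.one_lt.ne' (Nat.eq_one_of_dvd_one this)
    have hmulQ : ((x.num : ℚ)) = x * (x.den : ℚ) :=
      (div_eq_iff (by exact_mod_cast x.den_nz : (x.den : ℚ) ≠ 0)).mp (Rat.num_div_den x)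
    have hmul : ((x.num : ℚ_[p])) = (x : ℚ_[p]) * ((x.den : ℤ) : ℚ_[p]) := by
      exact_mod_cast congrArg (fun y : ℚ => (y : ℚ_[p])) hmulQ
    have hn1 : ‖((x.num : ℤ) : ℚ_[p])‖ = 1 := by
      refine le_antisymm (Padic.norm_int_le_one _) ?_
      by_contra hlt
      push_neg at hlt
      exact hnum (Padic.norm_intCast_lt_one_iff.mp hlt)
    have hd1 : ‖((x.den : ℤ) : ℚ_[p])‖ < 1 :=
      Padic.norm_intCast_lt_one_iff.mpr (Int.ofNat_dvd.mpr hden)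
    have hcon : (1 : ℝ) < 1 := by
      calc (1:ℝ) = ‖((x.num : ℤ) : ℚ_[p])‖ := hn1.symm
        _ = ‖(x : ℚ_[p])‖ * ‖((x.den : ℤ) : ℚ_[p])‖ := by rw [hmul, norm_mul]
        _ ≤ 1 * ‖((x.den : ℤ) : ℚ_[p])‖ := mul_le_mul_of_nonneg_right h (norm_nonneg _)
        _ < 1 := by rw [one_mul]; exact hd1
    exact absurd hcon (lt_irrefl 1)

lemma key (s p d : ℕ) (hp : p.Prime) (hd : d ≠ 0) (m : ℕ → ℚ) :
    ∑ k ∈ d.divisors, (moebius k : ℚ) * m (d / k) / (k : ℚ) ^ s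
      = ∑ k ∈ d.divisors.filter (fun k => ¬ p ∣ k),
          (moebius k : ℚ) / (k : ℚ) ^ s *
            (m (d / k) - (1 / (p : ℚ) ^ s) * (if p ∣ d / k then m (d / k / p) else 0)) := by
  classical
  rw [← Finset.sum_filter_add_sum_filter_not d.divisors (fun k => ¬ p ∣ k)]
  simp only [not_not]
  have hsplit : ∀ k ∈ d.divisors.filter (fun k => ¬ p ∣ k),
      (moebius k : ℚ) / (k : ℚ) ^ s *
        (m (d / k) - (1 / (p : ℚ) ^ s) * (if p ∣ d / k then m (d / k / p) else 0))
      = (moebius k : ℚ) * m (d / k) / (k : ℚ) ^ s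
        - (moebius k : ℚ) / (k : ℚ) ^ s * ((1 / (p : ℚ) ^ s) *
            (if p ∣ d / k then m (d / k / p) else 0)) := by
    intro k _; ring
  rw [Finset.sum_congr rfl hsplit, Finset.sum_sub_distrib]
  have hmain : ∑ k ∈ d.divisors.filter (fun k => p ∣ k),
      (moebius k : ℚ) * m (d / k) / (k : ℚ) ^ s
      = - ∑ k ∈ d.divisors.filter (fun k => ¬ p ∣ k),
          (moebius k : ℚ) / (k : ℚ) ^ s * ((1 / (p : ℚ) ^ s) *
            (if p ∣ d / k then m (d / k / p) else 0)) := by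
    by_cases hpd : p ∣ d
    · obtain ⟨u, hu⟩ := hpd
      have hu0 : u ≠ 0 := by rintro rfl; exact hd (by simp [hu])
      have hdp : d / p = u := by rw [hu, Nat.mul_div_cancel_left u hp.pos]
      have hLHS : ∑ k ∈ d.divisors.filter (fun k => p ∣ k),
          (moebius k : ℚ) * m (d / k) / (k : ℚ) ^ s
          = ∑ k ∈ u.divisors,
              (moebius (p * k) : ℚ) * m (d / (p * k)) / ((p * k : ℕ) : ℚ) ^ s := by
        refine Finset.sum_nbij' (fun j => j / p) (fun k => p * k) ?_ ?_ ?_ ?_ ?_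
        · intro j hj
          simp only [Finset.mem_filter, Nat.mem_divisors] at hj
          obtain ⟨⟨hjd, _⟩, hpj⟩ := hj
          obtain ⟨a, ha⟩ := hpj
          refine Nat.mem_divisors.mpr ⟨?_, hu0⟩
          obtain ⟨t, ht⟩ := hjd
          simp only [ha, Nat.mul_div_cancel_left a hp.pos]
          refine ⟨t, Nat.eq_of_mul_eq_mul_left hp.pos ?_⟩
          rw [← hu, ht, ha]; ring
        · intro k hk
          simp only [Nat.mem_divisors] at hk
          refine Finset.mem_filter.mpr ⟨Nat.mem_divisors.mpr ⟨?_, hd⟩, ⟨k, rfl⟩⟩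
          obtain ⟨t, ht⟩ := hk.1
          exact ⟨t, by rw [hu, ht]; ring⟩
        · intro j hj
          simp only [Finset.mem_filter] at hj
          exact Nat.mul_div_cancel' hj.2
        · intro k _
          exact Nat.mul_div_cancel_left k hp.pos
        · intro j hj
          simp only [Finset.mem_filter] at hj
          rw [Nat.mul_div_cancel' hj.2]
      rw [hLHS]
      rw [← Finset.sum_filter_add_sum_filter_not u.divisors (fun k => p ∣ k)]
      have hzero : ∑ k ∈ u.divisors.filter (fun k => p ∣ k),
          (moebius (p * k) : ℚ) * m (d / (p * k)) / ((p * k : ℕ) : ℚ) ^ s = 0 := by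
        refine Finset.sum_eq_zero fun k hk => ?_
        simp only [Finset.mem_filter] at hk
        have hmz : moebius (p * k) = 0 := by
          refine moebius_eq_zero_of_not_squarefree ?_
          intro hsq
          obtain ⟨t, ht⟩ := hk.2
          have := hsq p ⟨t, by rw [ht]; ring⟩
          exact hp.one_lt.ne' (Nat.isUnit_iff.mp this)
        rw [hmz]; simp
      rw [hzero, zero_add]
      have hsets : u.divisors.filter (fun k => ¬ p ∣ k)
          = d.divisors.filter (fun k => ¬ p ∣ k) := by
        ext k
        simp only [Finset.mem_filter, Nat.mem_divisors]
        constructor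
        · rintro ⟨⟨hk, _⟩, hnk⟩
          exact ⟨⟨hk.trans ⟨p, by rw [hu]; ring⟩, hd⟩, hnk⟩
        · rintro ⟨⟨hk, _⟩, hnk⟩
          refine ⟨⟨?_, hu0⟩, hnk⟩
          have hco : Nat.Coprime p k := (Nat.Prime.coprime_iff_not_dvd hp).mpr hnk
          have h1 : p * k ∣ d := Nat.Coprime.mul_dvd_of_dvd_of_dvd hco ⟨u, hu⟩ hk
          have := Nat.dvd_div_of_mul_dvd h1
          rwa [hdp] at this
      rw [hsets, ← Finset.sum_neg_distrib]
      refine Finset.sum_congr rfl fun k hk => ?_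
      simp only [Finset.mem_filter, Nat.mem_divisors] at hk
      obtain ⟨⟨hkd, _⟩, hnk⟩ := hk
      have hco : Nat.Coprime p k := (Nat.Prime.coprime_iff_not_dvd hp).mpr hnk
      have hkp : k * p ∣ d := Nat.Coprime.mul_dvd_of_dvd_of_dvd hco.symm hkd ⟨u, hu⟩
      have hpdk : p ∣ d / k := Nat.dvd_div_of_mul_dvd hkp
      have k0 : k ≠ 0 := by rintro rfl; exact hd (Nat.eq_zero_of_zero_dvd hkd)
      rw [if_pos hpdk]
      have harg : d / k / p = d / (p * k) := by
        rw [Nat.div_div_eq_div_mul, mul_comm]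
      have hmu : (moebius (p * k) : ℚ) = - (moebius k : ℚ) := by
        rw [isMultiplicative_moebius.map_mul_of_coprime hco, moebius_apply_prime hp]
        push_cast; ring
      rw [harg, hmu]
      have hps : ((p : ℚ)) ≠ 0 := by exact_mod_cast hp.pos.ne'
      have hks : ((k : ℚ)) ≠ 0 := by exact_mod_cast k0
      push_cast
      field_simp
      rw [mul_pow]; ring
    · have hL : d.divisors.filter (fun k => p ∣ k) = ∅ := by
        refine Finset.filter_eq_empty_iff.mpr fun k hk => ?_
        simp only [Nat.mem_divisors] at hk
        exact fun hpk => hpd (hpk.trans hk.1)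
      have hR : ∀ k ∈ d.divisors.filter (fun k => ¬ p ∣ k),
          (moebius k : ℚ) / (k : ℚ) ^ s * ((1 / (p : ℚ) ^ s) *
            (if p ∣ d / k then m (d / k / p) else 0)) = 0 := by
        intro k hk
        simp only [Finset.mem_filter, Nat.mem_divisors] at hk
        have : ¬ p ∣ d / k := fun h => hpd (h.trans (Nat.div_dvd_of_dvd hk.1.1))
        rw [if_neg this]; ring
      rw [hL, Finset.sum_empty, Finset.sum_congr rfl hR]
      simp
  rw [hmain]; ring

/-- if `m_d - (1/p^s) m_{d/p}` is `p`-integral for all `d` (with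
`m_{d/p} = 0` when `p ∤ d`), then `n_d = ∑_{k ∣ d} μ(k) m_{d/k} / k^s` is `p`-integral. -/
theorem stmt2 (s : ℕ) (hs : 1 ≤ s) (p : ℕ) (hp : p.Prime) (m : ℕ → ℚ)
    (hm : ∀ d : ℕ, 1 ≤ d →
      PIntegral p (m d - (1 / (p : ℚ) ^ s) * (if p ∣ d then m (d / p) else 0))) :
    ∀ d : ℕ, 1 ≤ d →
      PIntegral p (∑ k ∈ d.divisors, (moebius k : ℚ) * m (d / k) / (k : ℚ) ^ s) := by
  haveI : Fact p.Prime := ⟨hp⟩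
  intro d hd
  rw [pIntegral_iff, key s p d hp (by omega) m, Rat.cast_sum]
  refine Finset.sum_induction _ (fun x => ‖x‖ ≤ 1) (fun a b ha hb => ?_) (by simp) ?_
  · calc ‖a + b‖ ≤ max ‖a‖ ‖b‖ := Padic.nonarchimedean a b
      _ ≤ 1 := max_le ha hb
  · intro k hk
    simp only [Finset.mem_filter, Nat.mem_divisors] at hk
    obtain ⟨⟨hkd, _⟩, hnk⟩ := hk
    have k0 : k ≠ 0 := by rintro rfl; omega
    have hdk1 : 1 ≤ d / k := Nat.one_le_div_iff (Nat.pos_of_ne_zero k0) |>.mpr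
      (Nat.le_of_dvd (by omega) hkd)
    rw [Rat.cast_mul, norm_mul]
    have h1 : ‖(((moebius k : ℚ) / (k : ℚ) ^ s : ℚ) : ℚ_[p])‖ ≤ 1 := by
      rw [← pIntegral_iff]
      intro hdvd
      have heq : (moebius k : ℚ) / (k : ℚ) ^ s = ((moebius k : ℤ) : ℚ) / (((k : ℤ) ^ s : ℤ) : ℚ) := by
        push_cast; ring
      rw [heq, ← Rat.divInt_eq_div] at hdvd
      have hden := Rat.den_dvd (moebius k : ℤ) ((k : ℤ) ^ s)
      have : (p : ℤ) ∣ (k : ℤ) ^ s := dvd_trans (Int.ofNat_dvd.mpr hdvd) hden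
      have hpk : p ∣ k ^ s := by exact_mod_cast this
      exact hnk (hp.dvd_of_dvd_pow hpk)
    have h2 : ‖(((m (d / k) - (1 / (p : ℚ) ^ s) *
        (if p ∣ d / k then m (d / k / p) else 0)) : ℚ) : ℚ_[p])‖ ≤ 1 :=
      (pIntegral_iff p _).mp (hm (d / k) hdk1)
    calc ‖(((moebius k : ℚ) / (k : ℚ) ^ s : ℚ) : ℚ_[p])‖ * _ ≤ 1 * 1 :=
          mul_le_mul h1 h2 (norm_nonneg _) (by linarith [norm_nonneg ((((moebius k : ℚ) / (k : ℚ) ^ s : ℚ) : ℚ_[p]))])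
      _ = 1 := one_mul 1
end

section
/- Let s ≥ 1 and let (n_d)_{d≥1} be integers, and set m_d = (1/d^s) Σ_{k|d} k^s n_k. Then for every prime p and every d ≥ 1, the rational number m_d - (1/p^s) m_{d/p} is p-integral (with m_{d/p} = 0 if p ∤ d). -/
/-- If `x = A / e^s` with `A : ℤ` and `p ∤ e`, then `x` is `p`-integral. -/
lemma pIntegral_of_eq_div (p : ℕ) (hp : p.Prime) (s : ℕ) (A : ℤ) (e : ℕ)
    (hpe : ¬ p ∣ e) (x : ℚ) (hx : x = (A : ℚ) / ((e : ℚ) ^ s)) : PIntegral p x := by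
  intro hden
  have hx' : x = Rat.divInt A ((e : ℤ) ^ s) := by
    rw [Rat.divInt_eq_div, hx]; push_cast; ring
  have hdvd : (x.den : ℤ) ∣ (e : ℤ) ^ s := hx' ▸ Rat.den_dvd A ((e : ℤ) ^ s)
  have hdvd' : x.den ∣ e ^ s := by exact_mod_cast hdvd
  exact hpe (hp.dvd_of_dvd_pow (hden.trans hdvd'))

/-- if `n_d ∈ ℤ` and `m_d = (1/d^s) ∑_{k ∣ d} k^s n_k`, then for every
prime `p` and every `d ≥ 1` the rational number `m_d - (1/p^s) m_{d/p}` is `p`-integral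
(with `m_{d/p} = 0` if `p ∤ d`). -/
theorem stmt3 (s : ℕ) (hs : 1 ≤ s) (n : ℕ → ℤ) (m : ℕ → ℚ)
    (hm : ∀ d : ℕ, 1 ≤ d →
      m d = (1 / (d : ℚ) ^ s) * ∑ k ∈ d.divisors, (k : ℚ) ^ s * (n k : ℚ)) :
    ∀ p : ℕ, p.Prime → ∀ d : ℕ, 1 ≤ d →
      PIntegral p (m d - (1 / (p : ℚ) ^ s) * (if p ∣ d then m (d / p) else 0)) := by
  intro p hp d hd
  have hd0 : d ≠ 0 := by omega
  by_cases hpd : p ∣ d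
  · -- main case
    set a := d.factorization p with ha_def
    set e := d / p ^ a with he_def
    have ha : 1 ≤ a := hp.factorization_pos_of_dvd hd0 hpd
    have hdpe : p ^ a * e = d := Nat.ordProj_mul_ordCompl_eq_self d p
    have hpe : ¬ p ∣ e := Nat.not_dvd_ordCompl hp hd0
    have he0 : e ≠ 0 := (Nat.ordCompl_pos p hd0).ne'
    have hp0 : (p : ℚ) ≠ 0 := by exact_mod_cast hp.ne_zero
    have he0' : (e : ℚ) ≠ 0 := by exact_mod_cast he0
    set b := a - 1 with hb_def
    have hab : a = b + 1 := by omega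
    have hD : d / p = p ^ b * e := by
      have : d = p * (p ^ b * e) := by
        rw [← hdpe, hab]; ring
      rw [this, Nat.mul_div_cancel_left _ hp.pos]
    have hD0 : 1 ≤ d / p := Nat.div_pos (Nat.le_of_dvd (by omega) hpd) hp.pos
    have hDne : d / p ≠ 0 := by omega
    -- the set identity
    have hset : d.divisors \ (d / p).divisors
        = e.divisors.image (fun j => p ^ a * j) := by
      ext k
      simp only [Finset.mem_sdiff, Nat.mem_divisors, Finset.mem_image]
      constructor
      · rintro ⟨⟨hkd, -⟩, hknot⟩
        have hk0 : k ≠ 0 := by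
          rintro rfl; exact hd0 (zero_dvd_iff.mp hkd)
        have hkc : k / p ^ k.factorization p ∣ e :=
          Nat.ordCompl_dvd_ordCompl_of_dvd hkd p
        have hkle : k.factorization p ≤ a :=
          (Nat.factorization_le_iff_dvd hk0 hd0).mpr hkd p
        have hkeq : k.factorization p = a := by
          by_contra hne
          have hlt : k.factorization p ≤ b := by omega
          apply hknot
          refine ⟨?_, hDne⟩
          have : k = p ^ k.factorization p * (k / p ^ k.factorization p) :=
            (Nat.ordProj_mul_ordCompl_eq_self k p).symm
          rw [this, hD]
          exact mul_dvd_mul (pow_dvd_pow p hlt) hkc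
        refine ⟨k / p ^ k.factorization p, ⟨?_, he0⟩, ?_⟩
        · exact hkc
        · rw [← hkeq]; exact Nat.ordProj_mul_ordCompl_eq_self k p
      · rintro ⟨j, ⟨hje, -⟩, rfl⟩
        refine ⟨⟨?_, hd0⟩, ?_⟩
        · calc p ^ a * j ∣ p ^ a * e := mul_dvd_mul_left _ hje
            _ = d := hdpe
        · rintro ⟨hdvd, -⟩
          apply hpe
          have h1 : p ^ a ∣ p ^ b * e := dvd_trans (dvd_mul_right _ _) (hD ▸ hdvd)
          have h2 : p ^ b * p ∣ p ^ b * e := by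
            rwa [← pow_succ, ← hab]
          exact (mul_dvd_mul_iff_left (pow_ne_zero b hp.ne_zero)).mp h2
    -- the sum identity
    have hinj : Set.InjOn (fun j => p ^ a * j) e.divisors := fun x _ y _ h =>
      Nat.eq_of_mul_eq_mul_left (Nat.pow_pos hp.pos) h
    set A : ℤ := ∑ j ∈ e.divisors, (j : ℤ) ^ s * n (p ^ a * j) with hA_def
    have hsub : (d / p).divisors ⊆ d.divisors :=
      Nat.divisors_subset_of_dvd hd0 (Nat.div_dvd_of_dvd hpd)
    have hsum : (∑ k ∈ d.divisors, (k : ℚ) ^ s * (n k : ℚ))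
        - (∑ k ∈ (d / p).divisors, (k : ℚ) ^ s * (n k : ℚ))
        = (p : ℚ) ^ (a * s) * (A : ℚ) := by
      rw [← Finset.sum_sdiff_eq_sub hsub, hset,
        Finset.sum_image (fun x hx y hy h => hinj hx hy h), hA_def]
      push_cast
      rw [Finset.mul_sum]
      refine Finset.sum_congr rfl fun j hj => ?_
      rw [mul_pow, ← pow_mul]
      ring
    rw [if_pos hpd, hm d hd, hm (d / p) hD0]
    apply pIntegral_of_eq_div p hp s A e hpe
    have hdq : (d : ℚ) = (p : ℚ) ^ a * (e : ℚ) := by exact_mod_cast hdpe.symm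
    have hDq : ((d / p : ℕ) : ℚ) = (p : ℚ) ^ b * (e : ℚ) := by exact_mod_cast hD
    rw [hdq, hDq, hab]
    rw [eq_div_iff (pow_ne_zero s he0')]
    have hsum' : (∑ k ∈ d.divisors, (k : ℚ) ^ s * (n k : ℚ))
        = (∑ k ∈ (d / p).divisors, (k : ℚ) ^ s * (n k : ℚ))
          + (p : ℚ) ^ ((b + 1) * s) * (A : ℚ) := by
      rw [← hab]; linarith [hsum]
    rw [hsum']
    clear_value A e b a
    field_simp
    generalize (∑ k ∈ (d / p).divisors, (k : ℚ) ^ s * ((n k : ℚ))) = S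
    ring
  · -- p does not divide d
    rw [if_neg hpd, mul_zero, sub_zero, hm d hd]
    apply pIntegral_of_eq_div p hp s (∑ k ∈ d.divisors, (k : ℤ) ^ s * n k) d hpd
    push_cast
    rw [one_div, inv_mul_eq_div]
end

section
/- A power series V(z) = Σ_{d≥1} m_d z^d ∈ ℚ[[z]] can be written as Σ_{d≥1} n_d Li_s(z^d) with all n_d ∈ ℤ if and only if for every prime p the series (1/p^s)·V(z^p) - V(z) has all coefficients p-integral. -/
open Finset ArithmeticFunction
open scoped ArithmeticFunction.Moebius

private lemma pInt_iff {p : ℕ} (hp : p.Prime) (x : ℚ) : PIntegral p x ↔ padicNorm p x ≤ 1 := by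
  haveI := Fact.mk hp
  by_cases hx : x = 0
  · simp [hx, PIntegral, padicNorm, hp.one_lt.ne']
  rw [PIntegral, padicNorm.eq_zpow_of_nonzero hx]
  have hp1 : (1:ℚ) < p := by exact_mod_cast hp.one_lt
  rw [show (1:ℚ) = (p:ℚ)^(0:ℤ) by simp, zpow_le_zpow_iff_right₀ hp1, neg_nonpos]
  constructor
  · intro h
    rw [padicValRat, padicValNat.eq_zero_of_not_dvd h]
    simp [padicValInt]
  · intro h hdvd
    have hnum : ¬ p ∣ x.num.natAbs := by
      intro hd
      have h1 := Nat.dvd_gcd hd hdvd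
      rw [x.reduced] at h1
      exact hp.one_lt.ne' (Nat.dvd_one.mp h1)
    have h2 : padicValInt p x.num = 0 := padicValNat.eq_zero_of_not_dvd hnum
    have h3 : 1 ≤ padicValNat p x.den :=
      one_le_padicValNat_of_dvd x.den_pos.ne' hdvd
    rw [padicValRat, h2] at h
    omega

private lemma norm_nat_pow_eq_one {p : ℕ} (hp : p.Prime) [Fact p.Prime] {k : ℕ} (h : ¬ p ∣ k) (s : ℕ) :
    padicNorm p ((k : ℚ) ^ s) = 1 := by
  rw [show ((k:ℚ))^s = ((k^s : ℕ) : ℚ) by push_cast; ring]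
  rw [padicNorm.nat_eq_one_iff]
  intro hd
  exact h (hp.dvd_of_dvd_pow hd)

private lemma norm_mul3_le {p : ℕ} [hf : Fact p.Prime] {a b c : ℚ} (ha : padicNorm p a ≤ 1)
    (hb : padicNorm p b ≤ 1) (hc : padicNorm p c ≤ 1) : padicNorm p (a * (b * c)) ≤ 1 := by
  rw [padicNorm.mul, padicNorm.mul]
  have h1 : padicNorm p b * padicNorm p c ≤ 1 :=
    mul_le_one₀ hb (padicNorm.nonneg _) hc
  exact mul_le_one₀ ha (mul_nonneg (padicNorm.nonneg _) (padicNorm.nonneg _)) h1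

private theorem stmt4_key (s : ℕ) (m : ℕ → ℚ)
    (H : ∀ p : ℕ, p.Prime → ∀ d : ℕ, 1 ≤ d →
        PIntegral p (m d - (1 / (p : ℚ) ^ s) * (if p ∣ d then m (d / p) else 0)))
    (p : ℕ) (hp : p.Prime) (d : ℕ) (hd : 1 ≤ d) :
    padicNorm p ((∑ x ∈ d.divisorsAntidiagonal, (μ x.1 : ℚ) * ((x.2:ℚ)^s * m x.2)) / (d:ℚ)^s)
      ≤ 1 := by
  haveI := Fact.mk hp
  have hd0 : d ≠ 0 := by omega
  have Hm : ∀ k : ℕ, 1 ≤ k → ¬ p ∣ k → padicNorm p (m k) ≤ 1 := by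
    intro k hk hpk
    have := (pInt_iff hp _).mp (H p hp k hk)
    rwa [if_neg hpk, mul_zero, sub_zero] at this
  by_cases hpd : p ∣ d
  · -- the hard case
    set a := d.factorization p with ha
    set e := d / p ^ a with he
    have ha1 : 1 ≤ a := hp.factorization_pos_of_dvd hd0 hpd
    have hde : d = p ^ a * e := (Nat.ordProj_mul_ordCompl_eq_self d p).symm
    have hpe : ¬ p ∣ e := Nat.not_dvd_ordCompl hp hd0
    have he0 : e ≠ 0 := (Nat.ordCompl_pos p hd0).ne'
    have hp0 : p ≠ 0 := hp.pos.ne'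
    have hpQ : (p : ℚ) ≠ 0 := Nat.cast_ne_zero.mpr hp0
    have heQ : (e : ℚ) ≠ 0 := Nat.cast_ne_zero.mpr he0
    have hpow : p ^ a = p ^ (a-1) * p := by
      rw [← pow_succ]; congr 1; omega
    -- rewrite sum over divisors
    rw [Nat.sum_divisorsAntidiagonal' (f := fun i j => (μ i : ℚ) * ((j:ℚ)^s * m j))]
    set g : ℕ → ℚ := fun k => (μ (d/k) : ℚ) * ((k:ℚ)^s * m k) with hg
    -- split the sum
    rw [← Finset.sum_filter_add_sum_filter_not d.divisors (fun k => p ^ a ∣ k) g]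
    -- the second piece: only multiples of p^(a-1) contribute
    have vanish : ∑ k ∈ d.divisors.filter (fun k => ¬ p ^ a ∣ k), g k
        = ∑ k ∈ (d.divisors.filter (fun k => ¬ p ^ a ∣ k)).filter (fun k => p ^ (a-1) ∣ k),
            g k := by
      refine (Finset.sum_filter_of_ne ?_).symm
      intro k hk hgk
      by_contra hnk
      obtain ⟨hkmem, -⟩ := Finset.mem_filter.mp hk
      obtain ⟨hkdvd, -⟩ := Nat.mem_divisors.mp hkmem
      have hk0 : k ≠ 0 := (Nat.pos_of_mem_divisors hkmem).ne'
      have hb : k.factorization p < a - 1 := by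
        by_contra hb'
        exact hnk ((hp.pow_dvd_iff_le_factorization hk0).mpr (by omega))
      have hdk0 : d / k ≠ 0 := (Nat.div_pos (Nat.le_of_dvd (by omega) hkdvd)
        (Nat.pos_of_ne_zero hk0)).ne'
      have h2 : p ^ 2 ∣ d / k := by
        rw [hp.pow_dvd_iff_le_factorization hdk0, Nat.factorization_div hkdvd]
        simp only [Finsupp.coe_tsub, Pi.sub_apply]
        omega
      have hnsq : ¬ Squarefree (d / k) := by
        intro hsq
        exact hp.prime.not_unit (hsq p (by rwa [← sq]))
      apply hgk
      rw [hg]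
      simp [moebius_eq_zero_of_not_squarefree hnsq]
    rw [vanish]
    -- bijections
    have bijA : ∑ k ∈ d.divisors.filter (fun k => p ^ a ∣ k), g k
        = ∑ j ∈ e.divisors, g (p ^ a * j) := by
      refine (Finset.sum_nbij' (fun j => p ^ a * j) (fun k => k / p ^ a) ?_ ?_ ?_ ?_ ?_).symm
      · intro j hj
        obtain ⟨hje, -⟩ := Nat.mem_divisors.mp hj
        refine Finset.mem_filter.mpr ⟨Nat.mem_divisors.mpr ⟨?_, hd0⟩, Dvd.intro j rfl⟩
        rw [hde]; exact mul_dvd_mul_left _ hje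
      · intro k hk
        obtain ⟨hkmem, hpak⟩ := Finset.mem_filter.mp hk
        obtain ⟨hkdvd, -⟩ := Nat.mem_divisors.mp hkmem
        refine Nat.mem_divisors.mpr ⟨?_, he0⟩
        have h1 : p ^ a * (k / p ^ a) ∣ p ^ a * e := by
          rw [Nat.mul_div_cancel' hpak, ← hde]; exact hkdvd
        exact (mul_dvd_mul_iff_left (pow_ne_zero a hp0)).mp h1
      · intro j hj
        exact Nat.mul_div_cancel_left _ (pow_pos hp.pos a)
      · intro k hk
        exact Nat.mul_div_cancel' (Finset.mem_filter.mp hk).2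
      · intro j hj; rfl
    have bijB : ∑ k ∈ (d.divisors.filter (fun k => ¬ p ^ a ∣ k)).filter
          (fun k => p ^ (a-1) ∣ k), g k
        = ∑ j ∈ e.divisors, g (p ^ (a-1) * j) := by
      refine (Finset.sum_nbij' (fun j => p ^ (a-1) * j) (fun k => k / p ^ (a-1))
        ?_ ?_ ?_ ?_ ?_).symm
      · intro j hj
        obtain ⟨hje, -⟩ := Nat.mem_divisors.mp hj
        have hpj : ¬ p ∣ j := fun h => hpe (h.trans hje)
        refine Finset.mem_filter.mpr ⟨Finset.mem_filter.mpr ⟨Nat.mem_divisors.mpr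
          ⟨?_, hd0⟩, ?_⟩, Dvd.intro j rfl⟩
        · rw [hde, hpow, mul_assoc]
          exact mul_dvd_mul_left _ (hje.mul_left p)
        · -- ¬ p^a ∣ p^(a-1) * j
          intro hcon
          rw [hpow] at hcon
          exact hpj ((mul_dvd_mul_iff_left (pow_ne_zero (a-1) hp0)).mp hcon)
      · intro k hk
        obtain ⟨hk1, hpak⟩ := Finset.mem_filter.mp hk
        obtain ⟨hkmem, hnpak⟩ := Finset.mem_filter.mp hk1
        obtain ⟨hkdvd, -⟩ := Nat.mem_divisors.mp hkmem
        set j := k / p ^ (a-1) with hj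
        have hkj : k = p ^ (a-1) * j := (Nat.mul_div_cancel' hpak).symm
        have hpj : ¬ p ∣ j := by
          intro hcon
          apply hnpak
          rw [hkj, hpow]
          exact mul_dvd_mul (dvd_refl _) hcon
        have hjpe : j ∣ p * e := by
          have h1 : p ^ (a-1) * j ∣ p ^ (a-1) * (p * e) := by
            rw [← hkj, ← mul_assoc, ← hpow, ← hde]; exact hkdvd
          exact (mul_dvd_mul_iff_left (pow_ne_zero (a-1) hp0)).mp h1
        exact Nat.mem_divisors.mpr
          ⟨(Nat.Coprime.dvd_of_dvd_mul_left ((hp.coprime_iff_not_dvd.mpr hpj).symm) hjpe), he0⟩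
      · intro j hj
        exact Nat.mul_div_cancel_left _ (pow_pos hp.pos _)
      · intro k hk
        exact Nat.mul_div_cancel' (Finset.mem_filter.mp hk).2
      · intro j hj; rfl
    rw [bijA, bijB, ← Finset.sum_add_distrib, Finset.sum_div]
    apply padicNorm.sum_le' _ zero_le_one
    intro j hj
    obtain ⟨hje, -⟩ := Nat.mem_divisors.mp hj
    have hj0 : j ≠ 0 := (Nat.pos_of_mem_divisors hj).ne'
    have hpj : ¬ p ∣ j := fun h => hpe (h.trans hje)
    -- compute the divisions
    have div1 : d / (p ^ a * j) = e / j := by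
      rw [hde]; exact Nat.mul_div_mul_left e j (pow_pos hp.pos a)
    have div2 : d / (p ^ (a-1) * j) = p * (e / j) := by
      rw [hde, hpow, mul_assoc, Nat.mul_div_mul_left _ _ (pow_pos hp.pos (a-1)),
        Nat.mul_div_assoc p hje]
    have hpej : ¬ p ∣ e / j := fun h => hpe (h.trans (Nat.div_dvd_of_dvd hje))
    have mu2 : (μ (p * (e / j)) : ℤ) = - μ (e / j) := by
      rw [isMultiplicative_moebius.map_mul_of_coprime (hp.coprime_iff_not_dvd.mpr hpej),
        moebius_apply_prime hp]
      ring
    -- the combined term equals u j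
    have hterm : (g (p ^ a * j) + g (p ^ (a-1) * j)) / (d:ℚ)^s
        = (μ (e/j) : ℚ) * (((j:ℚ)^s / (e:ℚ)^s) *
            (m (p^a * j) - (1 / (p:ℚ)^s) * m (p^(a-1) * j))) := by
      rw [hg]
      simp only [div1, div2, mu2]
      push_cast
      have hcast : ((d:ℚ))^s = ((p:ℚ)^(a-1) * (p:ℚ))^s * (e:ℚ)^s := by
        rw [hde, hpow]; push_cast; ring
      rw [hcast]
      have hPQ : (p:ℚ)^(a-1) ≠ 0 := pow_ne_zero _ hpQ
      have h1 : ((p:ℚ))^a = (p:ℚ)^(a-1) * (p:ℚ) := by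
        rw [← pow_succ]; congr 1; omega
      rw [h1]
      field_simp
      ring
    rw [hterm]
    apply norm_mul3_le (padicNorm.of_int _)
    · rw [padicNorm.div, norm_nat_pow_eq_one hp hpe s]
      rw [show ((j:ℚ))^s = ((j^s : ℕ) : ℚ) by push_cast; ring, div_one]
      exact padicNorm.of_nat _
    · -- the bracket is p-integral by hypothesis
      have hd'1 : 1 ≤ p ^ a * j := Nat.one_le_iff_ne_zero.mpr
        (mul_ne_zero (pow_ne_zero a hp0) hj0)
      have hpd' : p ∣ p ^ a * j := Dvd.dvd.mul_right (dvd_pow_self p (by omega)) j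
      have hquot : p ^ a * j / p = p ^ (a-1) * j := by
        rw [hpow, mul_comm (p^(a-1)) p, mul_assoc, Nat.mul_div_cancel_left _ hp.pos]
      have := (pInt_iff hp _).mp (H p hp (p ^ a * j) hd'1)
      rwa [if_pos hpd', hquot] at this
  · -- easy case : p does not divide d
    rw [padicNorm.div, norm_nat_pow_eq_one hp hpd s, div_one]
    apply padicNorm.sum_le' _ zero_le_one
    intro x hx
    obtain ⟨hxd, -⟩ := Nat.mem_divisorsAntidiagonal.mp hx
    have hx2d : x.2 ∣ d := Dvd.intro_left x.1 hxd
    have hx21 : 1 ≤ x.2 := Nat.pos_of_dvd_of_pos hx2d (by omega)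
    have hpx2 : ¬ p ∣ x.2 := fun h => hpd (h.trans hx2d)
    exact norm_mul3_le (padicNorm.of_int _)
      (by rw [show ((x.2:ℚ))^s = ((x.2^s : ℕ) : ℚ) by push_cast; ring]; exact padicNorm.of_nat _)
      (Hm x.2 hx21 hpx2)

/-- a power series `V(z) = ∑_{d≥1} m_d z^d ∈ ℚ[[z]]` can be written as
`∑_{d≥1} n_d Li_s(z^d)` with all `n_d ∈ ℤ` if and only if for every prime `p` the
series `(1/p^s) V(z^p) - V(z)` has all coefficients `p`-integral, i.e.
`m_d - (1/p^s) m_{d/p}` is `p`-integral for every `d` (with `m_{d/p} = 0` if `p ∤ d`). -/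
theorem stmt4 (s : ℕ) (hs : 1 ≤ s) (m : ℕ → ℚ) :
    (∃ n : ℕ → ℤ, ∀ d : ℕ, 1 ≤ d →
        m d = ∑ k ∈ d.divisors, (n k : ℚ) / ((d / k : ℕ) : ℚ) ^ s) ↔
    (∀ p : ℕ, p.Prime → ∀ d : ℕ, 1 ≤ d →
        PIntegral p (m d - (1 / (p : ℚ) ^ s) * (if p ∣ d then m (d / p) else 0))) := by
  constructor
  · rintro ⟨n, hn⟩ p hp d hd
    haveI := Fact.mk hp
    rw [pInt_iff hp]
    have hd0 : d ≠ 0 := by omega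
    by_cases hpd : p ∣ d
    · rw [if_pos hpd]
      have hdp1 : 1 ≤ d / p := (Nat.one_le_div_iff hp.pos).mpr (Nat.le_of_dvd (by omega) hpd)
      rw [hn d hd, hn (d/p) hdp1, Finset.mul_sum]
      have key : ∀ k ∈ (d/p).divisors, (1 / (p:ℚ)^s) * ((n k : ℚ) / (((d/p) / k : ℕ) : ℚ) ^ s)
          = (n k : ℚ) / ((d / k : ℕ) : ℚ) ^ s := by
        intro k hk
        obtain ⟨hkdvd, -⟩ := Nat.mem_divisors.mp hk
        have hk0 : 0 < k := Nat.pos_of_mem_divisors hk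
        obtain ⟨t, ht⟩ := hkdvd
        have htd : d = p * k * t := by
          rw [mul_assoc, ← ht, Nat.mul_div_cancel' hpd]
        have h1 : d / k = p * ((d/p) / k) := by
          rw [Nat.div_div_eq_div_mul, htd,
            show p * k * t = k * (p * t) by ring, Nat.mul_div_cancel_left _ hk0,
            show k * (p * t) = p * k * t by ring, Nat.mul_div_cancel_left _ (Nat.mul_pos hp.pos hk0)]
        rw [h1, Nat.div_div_eq_div_mul]
        push_cast
        rw [mul_pow]
        field_simp
      rw [Finset.sum_congr rfl key]
      have hsub : (d/p).divisors ⊆ d.divisors :=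
        Nat.divisors_subset_of_dvd hd0 (Nat.div_dvd_of_dvd hpd)
      rw [← Finset.sum_sdiff_eq_sub hsub]
      apply padicNorm.sum_le' _ zero_le_one
      intro k hk
      obtain ⟨hkd, hknd⟩ := Finset.mem_sdiff.mp hk
      obtain ⟨hkdvd, -⟩ := Nat.mem_divisors.mp hkd
      have hnd : ¬ p ∣ d / k := by
        intro ⟨t, ht⟩
        apply hknd
        rw [Nat.mem_divisors]
        refine ⟨⟨t, ?_⟩, by omega⟩
        have hdk : d = k * (p * t) := by rw [← ht, Nat.mul_div_cancel' hkdvd]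
        rw [hdk, show k * (p*t) = p * (k*t) by ring, Nat.mul_div_cancel_left _ hp.pos]
      rw [padicNorm.div, norm_nat_pow_eq_one hp hnd]
      simpa using padicNorm.of_int (p := p) (n k)
    · rw [if_neg hpd, mul_zero, sub_zero, hn d hd]
      apply padicNorm.sum_le' _ zero_le_one
      intro k hk
      obtain ⟨hkdvd, -⟩ := Nat.mem_divisors.mp hk
      have hnd : ¬ p ∣ d / k := fun h => hpd (h.trans (Nat.div_dvd_of_dvd hkdvd))
      rw [padicNorm.div, norm_nat_pow_eq_one hp hnd]
      simpa using padicNorm.of_int (p := p) (n k)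
  · intro H
    have hnum : ∀ k : ℕ, 1 ≤ k →
        (((∑ x ∈ k.divisorsAntidiagonal, (μ x.1 : ℚ) * ((x.2:ℚ)^s * m x.2)) / (k:ℚ)^s).num : ℚ)
        = (∑ x ∈ k.divisorsAntidiagonal, (μ x.1 : ℚ) * ((x.2:ℚ)^s * m x.2)) / (k:ℚ)^s := by
      intro k hk
      set x := (∑ x ∈ k.divisorsAntidiagonal, (μ x.1 : ℚ) * ((x.2:ℚ)^s * m x.2)) / (k:ℚ)^s with hx
      have hden : x.den = 1 := by
        by_contra hden
        obtain ⟨q, hq, hqd⟩ := Nat.exists_prime_and_dvd hden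
        exact ((pInt_iff hq x).mpr (stmt4_key s m H q hq k hk)) hqd
      conv_rhs => rw [← Rat.num_div_den x, hden]
      simp
    refine ⟨fun k => ((∑ x ∈ k.divisorsAntidiagonal, (μ x.1 : ℚ) * ((x.2:ℚ)^s * m x.2))
      / (k:ℚ)^s).num, ?_⟩
    have inv : ∀ dd : ℕ, dd > 0 → ∑ i ∈ dd.divisors,
        (∑ x ∈ i.divisorsAntidiagonal, (μ x.1 : ℚ) * ((x.2:ℚ)^s * m x.2)) = (dd:ℚ)^s * m dd :=
      sum_eq_iff_sum_mul_moebius_eq.mpr (fun n hn => rfl)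
    intro d hd
    have hd0 : ((d:ℚ))^s ≠ 0 := pow_ne_zero _ (Nat.cast_ne_zero.mpr (by omega))
    have termwise : ∀ k ∈ d.divisors,
        ((((∑ x ∈ k.divisorsAntidiagonal, (μ x.1 : ℚ) * ((x.2:ℚ)^s * m x.2)) / (k:ℚ)^s).num : ℚ)
          / ((d / k : ℕ) : ℚ) ^ s)
        = (∑ x ∈ k.divisorsAntidiagonal, (μ x.1 : ℚ) * ((x.2:ℚ)^s * m x.2)) / (d:ℚ)^s := by
      intro k hk
      obtain ⟨hkdvd, -⟩ := Nat.mem_divisors.mp hk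
      have hk1 : 1 ≤ k := Nat.pos_of_mem_divisors hk
      rw [hnum k hk1, div_div]
      congr 1
      rw [← mul_pow]
      congr 1
      rw [show ((k:ℚ) * ((d/k : ℕ):ℚ)) = (((k * (d/k)) : ℕ) : ℚ) by push_cast; ring,
        Nat.mul_div_cancel' hkdvd]
    rw [Finset.sum_congr rfl termwise, ← Finset.sum_div, inv d hd]
    exact (mul_div_cancel_left₀ _ hd0).symm
end

section
/- In the ring of formal power series, the framing transformations form a group action of ℤ: if Y(z) ∈ ℤ[[z]] has constant term 1 and Y_f denotes the unique power series with constant term 1 satisfying Y_f(z) = Y(z·(-Y_f(z))^f), then (Y_f)_{f'} = Y_{f+f'} for all integers f, f'. -/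
open PowerSeries

noncomputable section

/-- Composition `f ∘ g` of formal power series (intended for `g` with zero constant
term, in which case the coefficient of `zⁿ` only involves the truncation below). -/
def PScomp (f g : ℚ⟦X⟧) : ℚ⟦X⟧ :=
  PowerSeries.mk fun n =>
    coeff n (∑ k ∈ Finset.range (n + 1), coeff k f • g ^ k)

/-- `exp(g)` for a formal power series `g` with zero constant term. -/
def expPS (g : ℚ⟦X⟧) : ℚ⟦X⟧ :=
  PowerSeries.mk fun n =>
    coeff n (∑ k ∈ Finset.range (n + 1), ((k.factorial : ℚ)⁻¹) • g ^ k)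

/-- The series `log(1+t) = ∑_{n≥1} (-1)^{n+1} tⁿ/n`. -/
def logOneAdd : ℚ⟦X⟧ :=
  PowerSeries.mk fun n => if n = 0 then 0 else (-1) ^ (n + 1) / n

/-- `log Y` for a power series `Y` with constant term `1`. -/
def logPS (Y : ℚ⟦X⟧) : ℚ⟦X⟧ := PScomp logOneAdd (Y - 1)

/-- Integer power `f ^ n` for `n : ℤ`, using the inverse in `ℚ⟦X⟧`. -/
def zpPS (f : ℚ⟦X⟧) (n : ℤ) : ℚ⟦X⟧ :=
  if 0 ≤ n then f ^ n.toNat else f⁻¹ ^ (-n).toNat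

/-- The logarithmic derivative `δ = z d/dz` on `ℚ⟦X⟧`. -/
def deltaPS (f : ℚ⟦X⟧) : ℚ⟦X⟧ := X * d⁄dX ℚ f

end

namespace Stmt8Aux

open PowerSeries Finset

lemma coeff_PScomp (a g : ℚ⟦X⟧) (n : ℕ) :
    coeff n (PScomp a g) = ∑ k ∈ range (n + 1), coeff k a * coeff n (g ^ k) := by
  simp [PScomp, coeff_mk, map_sum, coeff_smul, smul_eq_mul]

lemma coeff_pow_eq_zero {g : ℚ⟦X⟧} (hg : constantCoeff g = 0) {m k : ℕ} (h : m < k) :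
    coeff m (g ^ k) = 0 := by
  have hd : (X : ℚ⟦X⟧) ^ k ∣ g ^ k := pow_dvd_pow_of_dvd (X_dvd_iff.mpr hg) k
  exact X_pow_dvd_iff.mp hd m h

lemma coeff_aeval_trunc {g : ℚ⟦X⟧} (hg : constantCoeff g = 0) (a : ℚ⟦X⟧) {m N : ℕ}
    (h : m < N) :
    coeff m (Polynomial.aeval g (trunc N a)) = coeff m (PScomp a g) := by
  obtain ⟨N, rfl⟩ : ∃ N', N = N' + 1 := ⟨N - 1, by omega⟩
  rw [Polynomial.aeval_eq_sum_range' (natDegree_trunc_lt a N) g, map_sum, coeff_PScomp]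
  have e1 : ∀ i ∈ range (N + 1),
      coeff m ((trunc (N + 1) a).coeff i • g ^ i) = coeff i a * coeff m (g ^ i) := by
    intro i hi
    rw [coeff_smul, coeff_trunc, if_pos (mem_range.mp hi), smul_eq_mul]
  rw [Finset.sum_congr rfl e1]
  symm
  apply Finset.sum_subset
  · intro x hx; rw [mem_range] at *; omega
  · intro i hi hni
    rw [mem_range] at *
    rw [coeff_pow_eq_zero hg (by omega), mul_zero]

lemma dvd_comp_sub_aeval {g : ℚ⟦X⟧} (hg : constantCoeff g = 0) (a : ℚ⟦X⟧) (n : ℕ) :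
    (X : ℚ⟦X⟧) ^ (n + 1) ∣ PScomp a g - Polynomial.aeval g (trunc (n + 1) a) := by
  rw [X_pow_dvd_iff]
  intro m hm
  rw [map_sub, coeff_aeval_trunc hg a hm, sub_self]

lemma coeff_eq_of_dvd {u v : ℚ⟦X⟧} {n m : ℕ} (h : (X : ℚ⟦X⟧) ^ (n + 1) ∣ u - v)
    (hm : m ≤ n) : coeff m u = coeff m v := by
  have h2 := X_pow_dvd_iff.mp h m (by omega)
  rw [map_sub] at h2
  linarith

lemma dvd_aeval_sub {g : ℚ⟦X⟧} (hg : constantCoeff g = 0) {P Q : Polynomial ℚ} {n : ℕ}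
    (h : ∀ j ≤ n, P.coeff j = Q.coeff j) :
    (X : ℚ⟦X⟧) ^ (n + 1) ∣ Polynomial.aeval g P - Polynomial.aeval g Q := by
  rw [← map_sub]
  set q := P - Q with hq
  have hqc : ∀ j ≤ n, q.coeff j = 0 := by
    intro j hj; rw [hq, Polynomial.coeff_sub, h j hj, sub_self]
  rw [Polynomial.aeval_eq_sum_range g]
  apply Finset.dvd_sum
  intro i _
  by_cases hic : i ≤ n
  · rw [hqc i hic, zero_smul]
    exact dvd_zero _
  · have hd : (X : ℚ⟦X⟧) ^ (n + 1) ∣ g ^ i :=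
      (pow_dvd_pow (X : ℚ⟦X⟧) (by omega)).trans (pow_dvd_pow_of_dvd (X_dvd_iff.mpr hg) i)
    rw [smul_eq_C_mul]
    exact hd.mul_left _

lemma dvd_mul_sub_mul {x x' y y' d : ℚ⟦X⟧} (h1 : d ∣ x - x') (h2 : d ∣ y - y') :
    d ∣ x * y - x' * y' := by
  have e : x * y - x' * y' = x * (y - y') + (x - x') * y' := by ring
  rw [e]
  exact dvd_add (h2.mul_left x) (h1.mul_right y')

lemma PScomp_one (g : ℚ⟦X⟧) : PScomp 1 g = 1 := by
  ext n
  rw [coeff_PScomp, Finset.sum_eq_single 0]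
  · simp
  · intro k _ hk0; simp [coeff_one, hk0]
  · simp

lemma constantCoeff_PScomp (a g : ℚ⟦X⟧) :
    constantCoeff (PScomp a g) = constantCoeff a := by
  rw [← coeff_zero_eq_constantCoeff_apply, ← coeff_zero_eq_constantCoeff_apply,
    coeff_PScomp]
  simp

lemma PScomp_mul {g : ℚ⟦X⟧} (hg : constantCoeff g = 0) (a b : ℚ⟦X⟧) :
    PScomp (a * b) g = PScomp a g * PScomp b g := by
  ext n
  have htr : ∀ j ≤ n, (trunc (n + 1) (a * b)).coeff j
      = (trunc (n + 1) a * trunc (n + 1) b).coeff j := by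
    intro j hj
    rw [Polynomial.coeff_mul, coeff_trunc, if_pos (by omega), PowerSeries.coeff_mul]
    refine Finset.sum_congr rfl fun p hp => ?_
    rw [Finset.HasAntidiagonal.mem_antidiagonal] at hp
    rw [coeff_trunc, coeff_trunc, if_pos (by omega), if_pos (by omega)]
  have h2 : (X : ℚ⟦X⟧) ^ (n + 1) ∣
      Polynomial.aeval g (trunc (n + 1) (a * b)) -
        Polynomial.aeval g (trunc (n + 1) a) * Polynomial.aeval g (trunc (n + 1) b) := by
    rw [← map_mul]
    exact dvd_aeval_sub hg htr
  have h3 : (X : ℚ⟦X⟧) ^ (n + 1) ∣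
      PScomp a g * PScomp b g -
        Polynomial.aeval g (trunc (n + 1) a) * Polynomial.aeval g (trunc (n + 1) b) :=
    dvd_mul_sub_mul (dvd_comp_sub_aeval hg a n) (dvd_comp_sub_aeval hg b n)
  calc coeff n (PScomp (a * b) g)
      = coeff n (Polynomial.aeval g (trunc (n + 1) (a * b))) :=
        (coeff_aeval_trunc hg _ (by omega)).symm
    _ = coeff n (Polynomial.aeval g (trunc (n + 1) a) * Polynomial.aeval g (trunc (n + 1) b)) :=
        coeff_eq_of_dvd h2 le_rfl
    _ = coeff n (PScomp a g * PScomp b g) := (coeff_eq_of_dvd h3 le_rfl).symm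

lemma PScomp_pow {g : ℚ⟦X⟧} (hg : constantCoeff g = 0) (a : ℚ⟦X⟧) (k : ℕ) :
    PScomp (a ^ k) g = (PScomp a g) ^ k := by
  induction k with
  | zero => simpa using PScomp_one g
  | succ k ih => rw [pow_succ, pow_succ, PScomp_mul hg, ih]

lemma PScomp_smul (c : ℚ) (a g : ℚ⟦X⟧) : PScomp (c • a) g = c • PScomp a g := by
  ext n
  rw [coeff_PScomp, coeff_smul, coeff_PScomp, smul_eq_mul, Finset.mul_sum]
  refine Finset.sum_congr rfl fun k _ => ?_
  rw [coeff_smul, smul_eq_mul, mul_assoc]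

lemma PScomp_sum {ι : Type*} (s : Finset ι) (F : ι → ℚ⟦X⟧) (g : ℚ⟦X⟧) :
    PScomp (∑ i ∈ s, F i) g = ∑ i ∈ s, PScomp (F i) g := by
  ext n
  rw [coeff_PScomp, map_sum]
  simp only [coeff_PScomp]
  rw [Finset.sum_comm]
  refine Finset.sum_congr rfl fun k _ => ?_
  rw [map_sum, Finset.sum_mul]

lemma PScomp_neg (a g : ℚ⟦X⟧) : PScomp (-a) g = -PScomp a g := by
  ext n
  rw [coeff_PScomp, map_neg, coeff_PScomp, ← Finset.sum_neg_distrib]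
  refine Finset.sum_congr rfl fun k _ => ?_
  rw [map_neg, neg_mul]

lemma PScomp_X {g : ℚ⟦X⟧} (hg : constantCoeff g = 0) : PScomp X g = g := by
  ext n
  rw [coeff_PScomp]
  rcases n with _ | n
  · simp [coeff_zero_eq_constantCoeff_apply, hg]
  · rw [Finset.sum_eq_single 1]
    · simp
    · intro k _ hk1; simp [coeff_X, hk1]
    · intro h; exact absurd (Finset.mem_range.mpr (by omega)) h

lemma PScomp_inv {g : ℚ⟦X⟧} (hg : constantCoeff g = 0) {a : ℚ⟦X⟧}
    (ha : constantCoeff a ≠ 0) : PScomp a⁻¹ g = (PScomp a g)⁻¹ := by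
  have hc : constantCoeff (PScomp a g) ≠ 0 := by rw [constantCoeff_PScomp]; exact ha
  rw [PowerSeries.eq_inv_iff_mul_eq_one hc, ← PScomp_mul hg]
  rw [mul_comm, PowerSeries.mul_inv_cancel a ha, PScomp_one]

lemma PScomp_zpPS {g : ℚ⟦X⟧} (hg : constantCoeff g = 0) {a : ℚ⟦X⟧}
    (ha : constantCoeff a ≠ 0) (m : ℤ) :
    PScomp (zpPS a m) g = zpPS (PScomp a g) m := by
  unfold zpPS
  split_ifs with h
  · exact PScomp_pow hg a m.toNat
  · rw [PScomp_pow hg, PScomp_inv hg ha]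

lemma zpPS_add {a : ℚ⟦X⟧} (ha : constantCoeff a ≠ 0) (m n : ℤ) :
    zpPS a (m + n) = zpPS a m * zpPS a n := by
  have hmi : a * a⁻¹ = 1 := PowerSeries.mul_inv_cancel a ha
  let U : ℚ⟦X⟧ˣ := ⟨a, a⁻¹, hmi, by rw [mul_comm]; exact hmi⟩
  have key : ∀ k : ℤ, zpPS a k = ((U ^ k : ℚ⟦X⟧ˣ) : ℚ⟦X⟧) := by
    intro k
    unfold zpPS
    split_ifs with h
    · have hk : k = (k.toNat : ℤ) := by omega
      conv_rhs => rw [hk]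
      rw [zpow_natCast, Units.val_pow_eq_pow_val]
    · have hk : k = -((-k).toNat : ℤ) := by omega
      conv_rhs => rw [hk]
      rw [zpow_neg, zpow_natCast, ← inv_pow, Units.val_pow_eq_pow_val]
      rfl
  rw [key, key, key, zpow_add, Units.val_mul]

lemma PScomp_assoc {w u : ℚ⟦X⟧} (hw : constantCoeff w = 0)
    (hu : constantCoeff u = 0) (Y : ℚ⟦X⟧) :
    PScomp (PScomp Y w) u = PScomp Y (PScomp w u) := by
  ext n
  have e1 : coeff n (PScomp (PScomp Y w) u)
      = coeff n (PScomp (Polynomial.aeval w (trunc (n + 1) Y)) u) := by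
    rw [coeff_PScomp, coeff_PScomp]
    refine Finset.sum_congr rfl fun k hk => ?_
    rw [coeff_aeval_trunc hw Y (Finset.mem_range.mp hk)]
  have e2 : PScomp (Polynomial.aeval w (trunc (n + 1) Y)) u
      = ∑ i ∈ Finset.range (n + 1), coeff i Y • (PScomp w u) ^ i := by
    rw [Polynomial.aeval_eq_sum_range' (natDegree_trunc_lt Y n) w, PScomp_sum]
    refine Finset.sum_congr rfl fun i hi => ?_
    rw [PScomp_smul, PScomp_pow hu, coeff_trunc, if_pos (Finset.mem_range.mp hi)]
  rw [e1, e2]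
  conv_rhs => rw [PScomp]
  rw [coeff_mk]

end Stmt8Aux

open Stmt8Aux in
open PowerSeries in
/-- framing is a group action of `ℤ`.  For `Y ∈ ℤ[[z]]` with constant
term 1, let `Y_f` denote the unique power series with constant term 1 satisfying
`Y_f(z) = Y(z · (-Y_f(z))^f)` (uniqueness is part of the hypotheses).  Then
`(Y_f)_{f'} = Y_{f+f'}` for all integers `f, f'`: any series `B` with constant term 1
satisfying the framing-by-`f'` equation for `Y_f` equals `Y_{f+f'}`. -/
theorem stmt8 (Y : ℚ⟦X⟧) (hY1 : constantCoeff Y = 1)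
    (hYint : ∀ k : ℕ, ∃ a : ℤ, coeff k Y = a)
    (Yf : ℤ → ℚ⟦X⟧)
    (hYf1 : ∀ f : ℤ, constantCoeff (Yf f) = 1)
    (hYf : ∀ f : ℤ, Yf f = PScomp Y (X * zpPS (-(Yf f)) f))
    (hYfuniq : ∀ f : ℤ, ∀ A : ℚ⟦X⟧, constantCoeff A = 1 →
      A = PScomp Y (X * zpPS (-A) f) → A = Yf f) :
    ∀ f f' : ℤ, ∀ B : ℚ⟦X⟧, constantCoeff B = 1 →
      B = PScomp (Yf f) (X * zpPS (-B) f') → B = Yf (f + f') := by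
  intro f f' B hB1 hB
  set A := Yf f with hA_def
  have hA1 : constantCoeff A = 1 := hYf1 f
  set u := X * zpPS (-B) f' with hu_def
  set w := X * zpPS (-A) f with hw_def
  have hu0 : constantCoeff u = 0 := by simp [hu_def]
  have hw0 : constantCoeff w = 0 := by simp [hw_def]
  have hBne : constantCoeff (-B) ≠ 0 := by rw [map_neg, hB1]; norm_num
  have hAne : constantCoeff (-A) ≠ 0 := by rw [map_neg, hA1]; norm_num
  apply hYfuniq (f + f') B hB1
  have hsub : PScomp w u = X * zpPS (-B) (f + f') := by
    rw [hw_def, PScomp_mul hu0, PScomp_X hu0, PScomp_zpPS hu0 hAne, PScomp_neg, ← hB,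
      hu_def, zpPS_add hBne f f']
    ring
  calc B = PScomp A u := hB
    _ = PScomp (PScomp Y w) u := by
        have hAw : A = PScomp Y w := by rw [hw_def, hA_def]; exact hYf f
        rw [← hAw]
    _ = PScomp Y (PScomp w u) := PScomp_assoc hw0 hu0 Y
    _ = PScomp Y (X * zpPS (-B) (f + f')) := by rw [hsub]
end

section
/- Let Y ∈ ℚ[[z]] with constant term 1, let Ỹ be its framing transform (defined by z = -z̃ Ỹ(z̃) where z̃ = -z Y(z)), and let Y_1 be the unique series with constant term 1 satisfying Y_1(z) = Y(-z Y_1(z)). Then Y_1 equals the framing transform of Y^{-1}, i.e., Y_1 = (Y^{-1})~. -/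
open PowerSeries

namespace Stmt10Aux
open PowerSeries Finset

lemma coeff_pow_eq_zero {g : ℚ⟦X⟧} (hg : constantCoeff g = 0) {n k : ℕ} (h : n < k) :
    coeff n (g ^ k) = 0 := by
  have hdvd : (X : ℚ⟦X⟧) ^ k ∣ g ^ k := pow_dvd_pow_of_dvd (X_dvd_iff.mpr hg) k
  exact X_pow_dvd_iff.mp hdvd n h

lemma coeff_PScomp_eq {g : ℚ⟦X⟧} (hg : constantCoeff g = 0) (f : ℚ⟦X⟧) {n m : ℕ}
    (h : n < m) :
    coeff n (PScomp f g) = coeff n (Polynomial.aeval g (trunc m f)) := by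
  obtain ⟨m', rfl⟩ : ∃ m', m = m' + 1 := ⟨m - 1, by omega⟩
  rw [PScomp, coeff_mk,
    Polynomial.aeval_eq_sum_range' (natDegree_trunc_lt f m') g, map_sum, map_sum]
  have hsub : Finset.range (n + 1) ⊆ Finset.range (m' + 1) := Finset.range_subset_range.mpr (by omega)
  rw [← Finset.sum_subset hsub ?hz]
  case hz =>
    intro k _ hk
    simp only [Finset.mem_range, not_lt] at hk
    rw [map_smul, coeff_pow_eq_zero hg (by omega), smul_zero]
  apply Finset.sum_congr rfl
  intro k hk
  simp only [Finset.mem_range] at hk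
  rw [coeff_trunc, if_pos (by omega)]

lemma coeff_aeval_congr {g : ℚ⟦X⟧} (hg : constantCoeff g = 0) {p q : Polynomial ℚ} {n : ℕ}
    (h : ∀ k ≤ n, p.coeff k = q.coeff k) :
    coeff n (Polynomial.aeval g p) = coeff n (Polynomial.aeval g q) := by
  have hz : coeff n (Polynomial.aeval g (p - q)) = 0 := by
    rw [Polynomial.aeval_eq_sum_range, map_sum]
    apply Finset.sum_eq_zero
    intro k _
    rw [map_smul]
    rcases le_or_gt k n with hk | hk
    · rw [Polynomial.coeff_sub, h k hk, sub_self, zero_smul]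
    · rw [coeff_pow_eq_zero hg hk, smul_zero]
  rw [map_sub, map_sub, sub_eq_zero] at hz
  exact hz

lemma PScomp_mul {g : ℚ⟦X⟧} (hg : constantCoeff g = 0) (f₁ f₂ : ℚ⟦X⟧) :
    PScomp (f₁ * f₂) g = PScomp f₁ g * PScomp f₂ g := by
  ext n
  have h1 : coeff n (PScomp f₁ g * PScomp f₂ g)
      = coeff n (Polynomial.aeval g (trunc (n+1) f₁) * Polynomial.aeval g (trunc (n+1) f₂)) := by
    rw [coeff_mul, coeff_mul]
    apply Finset.sum_congr rfl
    intro p hp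
    rw [Finset.HasAntidiagonal.mem_antidiagonal] at hp
    rw [coeff_PScomp_eq (m := n+1) hg f₁ (by omega), coeff_PScomp_eq (m := n+1) hg f₂ (by omega)]
  rw [h1, ← map_mul, coeff_PScomp_eq hg (f₁ * f₂) (Nat.lt_succ_self n)]
  apply coeff_aeval_congr hg
  intro k hk
  rw [coeff_trunc, if_pos (by omega), PowerSeries.coeff_mul, Polynomial.coeff_mul]
  apply Finset.sum_congr rfl
  intro p hp
  rw [Finset.HasAntidiagonal.mem_antidiagonal] at hp
  rw [coeff_trunc, if_pos (by omega), coeff_trunc, if_pos (by omega)]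

lemma PScomp_one (g : ℚ⟦X⟧) : PScomp 1 g = 1 := by
  ext n
  rw [PScomp, coeff_mk, map_sum]
  rw [Finset.sum_eq_single 0]
  · simp
  · intro k _ hk
    rw [map_smul, coeff_one, if_neg hk, zero_smul]
  · intro h
    simp at h

lemma PScomp_X {g : ℚ⟦X⟧} (hg : constantCoeff g = 0) : PScomp X g = g := by
  ext n
  rw [PScomp, coeff_mk, map_sum]
  rcases Nat.eq_zero_or_pos n with rfl | hn
  · simp [hg]
  · rw [Finset.sum_eq_single 1]
    · simp
    · intro k _ hk
      rw [map_smul, coeff_X, if_neg hk, zero_smul]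
    · intro h
      simp at h
      omega

lemma PScomp_neg (f g : ℚ⟦X⟧) : PScomp (-f) g = -PScomp f g := by
  ext n
  simp [PScomp, neg_smul]

lemma coeff_PScomp_congr (f : ℚ⟦X⟧) {a b : ℚ⟦X⟧} {n : ℕ}
    (hdvd : (X : ℚ⟦X⟧) ^ (n + 1) ∣ a - b) :
    coeff n (PScomp f a) = coeff n (PScomp f b) := by
  rw [PScomp, PScomp, coeff_mk, coeff_mk, map_sum, map_sum]
  apply Finset.sum_congr rfl
  intro k _
  rw [map_smul, map_smul]
  congr 1
  have h1 : (X : ℚ⟦X⟧) ^ (n + 1) ∣ a ^ k - b ^ k :=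
    hdvd.trans (sub_dvd_pow_sub_pow a b k)
  have h2 := X_pow_dvd_iff.mp h1 n (Nat.lt_succ_self n)
  rw [map_sub, sub_eq_zero] at h2
  exact h2

end Stmt10Aux

open PowerSeries in
/-- for `Y` with constant term 1, the series `Y₁` (constant term 1,
satisfying `Y₁(z) = Y(-z Y₁(z))`, i.e. framing by `f = 1`) equals the framing
transform of `Y⁻¹`, i.e. the unique `Z` with constant term 1 such that
`z ↦ -z Z(z)` is the compositional inverse of `z ↦ -z Y⁻¹(z)`. -/
theorem stmt10 (Y : ℚ⟦X⟧) (hY1 : constantCoeff Y = 1)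
    (Y1 : ℚ⟦X⟧) (hY11 : constantCoeff Y1 = 1)
    (hY1eq : Y1 = PScomp Y (-(X * Y1)))
    (Z : ℚ⟦X⟧) (hZ1 : constantCoeff Z = 1)
    (hZ : PScomp (-(X * Y⁻¹)) (-(X * Z)) = X) :
    Y1 = Z := by
  open Stmt10Aux in
  set g : ℚ⟦X⟧ := -(X * Z) with hgdef
  have hg : constantCoeff g = 0 := by simp [hgdef]
  have hYY : Y * Y⁻¹ = 1 := PowerSeries.mul_inv_cancel Y (by rw [hY1]; norm_num)
  -- Step 1: Z = PScomp Y g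
  have h2 : PScomp (-(X * Y⁻¹)) g = -(g * PScomp Y⁻¹ g) := by
    rw [show -(X * Y⁻¹) = -((X : ℚ⟦X⟧) * Y⁻¹) from rfl, Stmt10Aux.PScomp_neg,
      Stmt10Aux.PScomp_mul hg, Stmt10Aux.PScomp_X hg]
  have h3 : (X * Z) * PScomp Y⁻¹ g = X := by
    have h := hZ
    rw [h2] at h
    rw [hgdef] at h
    linear_combination h
  have h4 : PScomp Y g * PScomp Y⁻¹ g = 1 := by
    rw [← Stmt10Aux.PScomp_mul hg, hYY, Stmt10Aux.PScomp_one]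
  have h6 : X * Z = X * PScomp Y g := by
    calc X * Z = (X * Z) * (PScomp Y⁻¹ g * PScomp Y g) := by
          rw [mul_comm (PScomp Y⁻¹ g), h4, mul_one]
      _ = ((X * Z) * PScomp Y⁻¹ g) * PScomp Y g := by ring
      _ = X * PScomp Y g := by rw [h3]
  have hZeq : Z = PScomp Y g := mul_left_cancel₀ PowerSeries.X_ne_zero h6
  -- Step 2: uniqueness by strong induction on coefficients
  have key : ∀ n, coeff n Y1 = coeff n Z := by
    intro n
    induction n using Nat.strong_induction_on with
    | _ n ih =>
      have h7 : (X : ℚ⟦X⟧) ^ n ∣ Y1 - Z :=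
        X_pow_dvd_iff.mpr (fun m hm => by rw [map_sub, ih m hm, sub_self])
      have hd : (X : ℚ⟦X⟧) ^ (n + 1) ∣ (-(X * Y1)) - (-(X * Z)) := by
        have he : (-(X * Y1)) - (-(X * Z)) = X * (Z - Y1) := by ring
        have h8 : (X : ℚ⟦X⟧) ^ n ∣ Z - Y1 := by
          rw [show Z - Y1 = -(Y1 - Z) by ring]
          exact dvd_neg.mpr h7
        rw [he, pow_succ']
        exact mul_dvd_mul dvd_rfl h8
      calc coeff n Y1 = coeff n (PScomp Y (-(X * Y1))) := by rw [← hY1eq]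
        _ = coeff n (PScomp Y (-(X * Z))) := Stmt10Aux.coeff_PScomp_congr Y hd
        _ = coeff n Z := by rw [← hgdef, ← hZeq]
  ext n
  exact key n
end
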